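/- Let d ≥ 2 be a natural number, C a natural-number constant, and T : ℕ → ℕ a function satisfying T(u) ≤ d · T(⌊u/d⌋) + C · u for all u ≥ 1. Then T(u) ∈ O(u · log u); that is, there exist constants c and M such that for all u ≥ max c 2, T(u) ≤ M · u · Nat.log 2 u. -/
import Mathlib


/-- Master Theorem instantiation (Table 1, row 2): the recurrence
`T(u) ≤ d·T(⌊u/d⌋) + C·u` with `d ≥ 2` yields the bound `O(u log u)`. -/
theorem master_div_linear (d C : ℕ) (hd : 2 ≤ d) (T : ℕ → ℕ)
    (hT : ∀ u, 1 ≤ u → T u ≤ d * T (u / d) + C * u) :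
    ∃ c M : ℕ, ∀ u, max c 2 ≤ u → T u ≤ M * u * Nat.log 2 u := by
  set K := d * T 0 + C with hK
  have hCK : C ≤ K := Nat.le_add_left _ _
  -- main induction: T u ≤ K * u * (log d u + 1) for u ≥ 1
  have main : ∀ u, 1 ≤ u → T u ≤ K * u * (Nat.log d u + 1) := by
    intro u
    induction u using Nat.strong_induction_on with
    | _ u ih =>
      intro hu
      by_cases hud : u < d
      · -- base case: u / d = 0
        have h0 : u / d = 0 := Nat.div_eq_of_lt hud
        have := hT u hu
        rw [h0] at this
        calc T u ≤ d * T 0 + C * u := this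
          _ ≤ d * T 0 * u + C * u := by
              nlinarith [Nat.mul_le_mul_left (d * T 0) hu]
          _ = K * u := by ring
          _ ≤ K * u * (Nat.log d u + 1) := Nat.le_mul_of_pos_right _ (Nat.succ_pos _)
      · push_neg at hud
        have hdpos : 0 < d := by omega
        have hdiv_lt : u / d < u := Nat.div_lt_self (by omega) (by omega)
        have hdiv_pos : 1 ≤ u / d := (Nat.one_le_div_iff hdpos).mpr hud
        have hrec := ih (u / d) hdiv_lt hdiv_pos
        have hlog : Nat.log d (u / d) + 1 = Nat.log d u := by
          rw [Nat.log_div_base]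
          have : 1 ≤ Nat.log d u := Nat.log_pos (by omega) hud
          omega
        calc T u ≤ d * T (u / d) + C * u := hT u hu
          _ ≤ d * (K * (u / d) * (Nat.log d (u / d) + 1)) + C * u :=
              Nat.add_le_add_right (Nat.mul_le_mul_left d hrec) _
          _ = K * (d * (u / d)) * (Nat.log d (u / d) + 1) + C * u := by ring
          _ ≤ K * u * (Nat.log d (u / d) + 1) + C * u := by
              have : d * (u / d) ≤ u := Nat.mul_div_le u d
              have h1 : K * (d * (u / d)) ≤ K * u := Nat.mul_le_mul_left K this
              exact Nat.add_le_add_right (Nat.mul_le_mul_right _ h1) _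
          _ = K * u * Nat.log d u + C * u := by rw [hlog]
          _ ≤ K * u * Nat.log d u + K * u := by
              exact Nat.add_le_add_left (Nat.mul_le_mul_right u hCK) _
          _ = K * u * (Nat.log d u + 1) := by ring
  refine ⟨2, 2 * K, fun u hu => ?_⟩
  have hu2 : 2 ≤ u := le_trans (le_max_right _ _) hu
  have h1 : Nat.log d u ≤ Nat.log 2 u := Nat.log_anti_left (by omega) hd
  have h2 : 1 ≤ Nat.log 2 u := Nat.log_pos (by omega) hu2
  calc T u ≤ K * u * (Nat.log d u + 1) := main u (by omega)
    _ ≤ K * u * (2 * Nat.log 2 u) := by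
        apply Nat.mul_le_mul_left
        omega
    _ = 2 * K * u * Nat.log 2 u := by ring
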